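/- Suppose the offline optimal points satisfy the first-order condition ∇f_t(x_t*) + 2x_t* − x_{t−1}* − x_{t+1}* = 0, f_t is strongly convex with ∇f_t(x)·(x − v_t) ≥ m‖x − v_t‖², and set δ_t = ‖x_t* − v_t‖, ε_t = ‖v_t − v_{t−1}‖. Then δ_t(δ_{t−1} + δ_{t+1} + ε_t + ε_{t+1}) ≥ (m + 2)δ_t². -/

import Mathlib

theorem stmt_7 (d : ℕ) (m : ℝ) (hm : 0 < m) (t : ℕ) (ht : 1 ≤ t)
    (g : EuclideanSpace ℝ (Fin d) → EuclideanSpace ℝ (Fin d))  -- gradient of fₜ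
    (v xstar : ℕ → EuclideanSpace ℝ (Fin d))
    (hsc : ∀ x, m * ‖x - v t‖ ^ 2 ≤ (inner ℝ (g x) (x - v t) : ℝ))
    (hfoc : g (xstar t) + (2 : ℝ) • xstar t - xstar (t - 1) - xstar (t + 1) = 0) :
    (m + 2) * ‖xstar t - v t‖ ^ 2 ≤
      ‖xstar t - v t‖ * (‖xstar (t - 1) - v (t - 1)‖ + ‖xstar (t + 1) - v (t + 1)‖ +
        ‖v t - v (t - 1)‖ + ‖v (t + 1) - v t‖) := by
  set u := xstar t - v t with hu
  have hg : g (xstar t) = (xstar (t-1) - v (t-1)) + (xstar (t+1) - v (t+1))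
      + (v (t-1) - v t) + (v (t+1) - v t) - (2:ℝ) • u := by
    have : g (xstar t) = xstar (t-1) + xstar (t+1) - (2:ℝ) • xstar t := by
      have h := hfoc
      apply sub_eq_zero.mp
      rw [← hfoc]; abel
    rw [this, hu]
    module
  have h1 := hsc (xstar t)
  rw [hg] at h1
  have hin : (inner ℝ ((xstar (t-1) - v (t-1)) + (xstar (t+1) - v (t+1))
      + (v (t-1) - v t) + (v (t+1) - v t) - (2:ℝ) • u) u : ℝ)
      = inner ℝ (xstar (t-1) - v (t-1)) u + inner ℝ (xstar (t+1) - v (t+1)) u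
        + inner ℝ (v (t-1) - v t) u + inner ℝ (v (t+1) - v t) u - 2 * ‖u‖^2 := by
    rw [inner_sub_left, inner_add_left, inner_add_left, inner_add_left,
      real_inner_smul_left, real_inner_self_eq_norm_sq]
    try ring
  rw [hin] at h1
  have c1 : (inner ℝ (xstar (t-1) - v (t-1)) u : ℝ) ≤ ‖xstar (t-1) - v (t-1)‖ * ‖u‖ :=
    real_inner_le_norm _ _
  have c2 : (inner ℝ (xstar (t+1) - v (t+1)) u : ℝ) ≤ ‖xstar (t+1) - v (t+1)‖ * ‖u‖ :=
    real_inner_le_norm _ _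
  have c3 : (inner ℝ (v (t-1) - v t) u : ℝ) ≤ ‖v t - v (t-1)‖ * ‖u‖ := by
    calc (inner ℝ (v (t-1) - v t) u : ℝ) ≤ ‖v (t-1) - v t‖ * ‖u‖ := real_inner_le_norm _ _
    _ = ‖v t - v (t-1)‖ * ‖u‖ := by rw [norm_sub_rev]
  have c4 : (inner ℝ (v (t+1) - v t) u : ℝ) ≤ ‖v (t+1) - v t‖ * ‖u‖ :=
    real_inner_le_norm _ _
  nlinarith [norm_nonneg u]
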